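/- Let G be a graph on vertex set {1,...,n} with adjacency matrix A_G, let k < n, and define f = ∏_{s=1}^{C(n,2)} (x A_G xᵀ − s) · ∏_{t=0}^{n−k−1} (Σ_{i=1}^n x_i − t) over ℚ. Then G has a vertex cover of size at most k if and only if f does not belong to the ideal ⟨x_1² − x_1, ..., x_n² − x_n⟩. -/

import Mathlib

open MvPolynomial

namespace Stmt8Aux

variable {n : ℕ}

/-- The boolean ideal. -/
noncomputable def I (n : ℕ) : Ideal (MvPolynomial (Fin n) ℚ) :=
  Ideal.span (Set.range fun i : Fin n => (X i : MvPolynomial (Fin n) ℚ) ^ 2 - X i)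

lemma pow_sub_mem (i : Fin n) : ∀ k : ℕ, 1 ≤ k →
    (X i ^ k - X i : MvPolynomial (Fin n) ℚ) ∈ I n
  | 1, _ => by rw [pow_one, sub_self]; exact Submodule.zero_mem _
  | (k + 2), _ => by
    have h1 : (X i ^ (k + 1) - X i : MvPolynomial (Fin n) ℚ) ∈ I n :=
      pow_sub_mem i (k + 1) (by omega)
    have h2 : ((X i) ^ 2 - X i : MvPolynomial (Fin n) ℚ) ∈ I n :=
      Ideal.subset_span ⟨i, rfl⟩
    have he : (X i ^ (k + 2) - X i : MvPolynomial (Fin n) ℚ)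
        = X i ^ k * ((X i) ^ 2 - X i) + (X i ^ (k + 1) - X i) := by ring
    rw [he]
    exact Ideal.add_mem _ (Ideal.mul_mem_left _ _ h2) h1

lemma prod_pow_sub_prod_mem (s : Finset (Fin n)) (m : Fin n → ℕ)
    (hm : ∀ i ∈ s, 1 ≤ m i) :
    ((∏ i ∈ s, X i ^ m i) - (∏ i ∈ s, X i) : MvPolynomial (Fin n) ℚ) ∈ I n := by
  induction s using Finset.induction_on with
  | empty => simpa using Submodule.zero_mem _
  | @insert a s ha ih =>
    rw [Finset.prod_insert ha, Finset.prod_insert ha]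
    have h1 := ih (fun i hi => hm i (Finset.mem_insert_of_mem hi))
    have h2 := pow_sub_mem a (m a) (hm a (Finset.mem_insert_self a s))
    have he : (X a ^ m a * ∏ i ∈ s, X i ^ m i) - (X a * ∏ i ∈ s, X i)
        = X a ^ m a * ((∏ i ∈ s, X i ^ m i) - ∏ i ∈ s, X i)
          + (∏ i ∈ s, X i) * (X a ^ m a - X a : MvPolynomial (Fin n) ℚ) := by ring
    rw [he]
    exact Ideal.add_mem _ (Ideal.mul_mem_left _ _ h1) (Ideal.mul_mem_left _ _ h2)

/-- squarefree truncation of an exponent vector -/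
noncomputable def sq (m : Fin n →₀ ℕ) : Fin n →₀ ℕ :=
  Finsupp.mapRange (fun a => min a 1) (by simp) m

lemma sq_apply (m : Fin n →₀ ℕ) (i : Fin n) : sq m i = min (m i) 1 := rfl

lemma sq_support (m : Fin n →₀ ℕ) : (sq m).support = m.support := by
  ext i
  simp [Finsupp.mem_support_iff, sq_apply]

lemma monomial_sub_sq_mem (m : Fin n →₀ ℕ) (c : ℚ) :
    (monomial m c - monomial (sq m) c : MvPolynomial (Fin n) ℚ) ∈ I n := by
  rw [monomial_eq, monomial_eq]
  have h1 : ((sq m).prod fun i e => (X i : MvPolynomial (Fin n) ℚ) ^ e)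
      = ∏ i ∈ m.support, X i := by
    rw [Finsupp.prod, sq_support]
    refine Finset.prod_congr rfl fun i hi => ?_
    have : m i ≠ 0 := Finsupp.mem_support_iff.mp hi
    rw [sq_apply]
    have : min (m i) 1 = 1 := by omega
    rw [this, pow_one]
  rw [h1, Finsupp.prod, ← mul_sub]
  exact Ideal.mul_mem_left _ _
    (prod_pow_sub_prod_mem m.support m
      (fun i hi => Nat.one_le_iff_ne_zero.mpr (Finsupp.mem_support_iff.mp hi)))

lemma sub_reduction_mem (f : MvPolynomial (Fin n) ℚ) :
    f - (∑ m ∈ f.support, monomial (sq m) (coeff m f)) ∈ I n := by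
  have he : f - (∑ m ∈ f.support, monomial (sq m) (coeff m f))
      = ∑ m ∈ f.support, (monomial m (coeff m f) - monomial (sq m) (coeff m f)) := by
    rw [Finset.sum_sub_distrib, ← f.as_sum]
  rw [he]
  exact Submodule.sum_mem _ fun m _ => monomial_sub_sq_mem m (coeff m f)

lemma multilinear_zero (g : MvPolynomial (Fin n) ℚ)
    (hml : ∀ m ∈ g.support, ∀ i, m i ≤ 1)
    (h : ∀ x : Fin n → ℚ, (∀ i, x i = 0 ∨ x i = 1) → eval x g = 0) : g = 0 := by
  by_contra hg
  have hne : g.support.Nonempty := by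
    rw [Finset.nonempty_iff_ne_empty]
    simpa [MvPolynomial.support_eq_empty] using hg
  obtain ⟨m, hm, hmin⟩ := Finset.exists_min_image g.support (fun m => m.support.card) hne
  set x : Fin n → ℚ := fun i => if i ∈ m.support then 1 else 0 with hxdef
  have hx : ∀ i, x i = 0 ∨ x i = 1 := by
    intro i
    by_cases hi : i ∈ m.support
    · right; simp only [hxdef]; rw [if_pos hi]
    · left; simp only [hxdef]; rw [if_neg hi]
  have heval : eval x g = coeff m g := by
    rw [eval_eq]
    rw [Finset.sum_eq_single m]
    · have : (∏ i ∈ m.support, x i ^ m i) = 1 := by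
        refine Finset.prod_eq_one fun i hi => ?_
        have hx1 : x i = 1 := by simp only [hxdef]; rw [if_pos hi]
        rw [hx1, one_pow]
      rw [this, mul_one]
    · intro m' hm' hmm'
      by_cases hsub : m'.support ⊆ m.support
      · exfalso
        have hcard : m.support.card ≤ m'.support.card := hmin m' hm'
        have hseq : m'.support = m.support :=
          Finset.eq_of_subset_of_card_le hsub hcard
        apply hmm'
        ext i
        by_cases hi : i ∈ m.support
        · have h1 : m i ≤ 1 := hml m hm i
          have h2 : m' i ≤ 1 := hml m' hm' i
          have h3 : m i ≠ 0 := Finsupp.mem_support_iff.mp hi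
          have h4 : m' i ≠ 0 := Finsupp.mem_support_iff.mp (hseq ▸ hi)
          omega
        · have h3 : m i = 0 := Finsupp.notMem_support_iff.mp hi
          have h4 : m' i = 0 := Finsupp.notMem_support_iff.mp (fun hh => hi (hseq ▸ hh))
          omega
      · obtain ⟨i, hi1, hi2⟩ := Finset.not_subset.mp hsub
        have hxi : x i = 0 := by simp only [hxdef]; rw [if_neg hi2]
        have : x i ^ m' i = 0 := by
          rw [hxi, zero_pow (Finsupp.mem_support_iff.mp hi1)]
        rw [Finset.prod_eq_zero hi1 this, mul_zero]
    · intro hnm; exact absurd hm hnm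
  have := h x hx
  rw [heval] at this
  exact (MvPolynomial.mem_support_iff.mp hm) this

lemma mem_I_iff (f : MvPolynomial (Fin n) ℚ) :
    f ∈ I n ↔ ∀ x : Fin n → ℚ, (∀ i, x i = 0 ∨ x i = 1) → eval x f = 0 := by
  constructor
  · intro hf x hx
    have hle : I n ≤ RingHom.ker (eval x) := by
      rw [I, Ideal.span_le]
      rintro _ ⟨i, rfl⟩
      rcases hx i with h | h <;> simp [RingHom.mem_ker, h]
    exact hle hf
  · intro h
    set g : MvPolynomial (Fin n) ℚ := ∑ m ∈ f.support, monomial (sq m) (coeff m f) with hg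
    have hfg : f - g ∈ I n := sub_reduction_mem f
    have hml : ∀ m ∈ g.support, ∀ i, m i ≤ 1 := by
      intro m hm i
      have := MvPolynomial.support_sum hm
      obtain ⟨m', _, hm'⟩ := Finset.mem_biUnion.mp this
      have := MvPolynomial.support_monomial_subset hm'
      rw [Finset.mem_singleton] at this
      subst this
      rw [sq_apply]
      omega
    have hg0 : g = 0 := by
      refine multilinear_zero g hml fun x hx => ?_
      have h1 : eval x (f - g) = 0 := by
        have hle : I n ≤ RingHom.ker (eval x) := by
          rw [I, Ideal.span_le]
          rintro _ ⟨i, rfl⟩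
          rcases hx i with hh | hh <;> simp [RingHom.mem_ker, hh]
        exact hle hfg
      have h2 := h x hx
      rw [map_sub, h2] at h1
      linarith
    rw [hg0, sub_zero] at hfg
    exact hfg

lemma pair_eq {a b c d : Fin n} (hab : a < b) (hcd : c < d)
    (h : ({a, b} : Finset (Fin n)) = {c, d}) : a = c ∧ b = d := by
  have ha : a = c ∨ a = d := by
    have : a ∈ ({c, d} : Finset (Fin n)) := h ▸ (by simp)
    simpa using this
  have hb : b = c ∨ b = d := by
    have : b ∈ ({c, d} : Finset (Fin n)) := h ▸ (by simp)
    simpa using this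
  have hc : c = a ∨ c = b := by
    have : c ∈ ({a, b} : Finset (Fin n)) := h.symm ▸ (by simp)
    simpa using this
  rcases ha with rfl | rfl
  · refine ⟨rfl, ?_⟩
    rcases hb with rfl | rfl
    · exact absurd hab (lt_irrefl _)
    · rfl
  · exfalso
    rcases hc with rfl | rfl
    · exact absurd hcd (lt_irrefl _)
    · exact absurd (hab.trans hcd) (lt_irrefl _)

lemma card_lt_pairs : (Finset.univ.filter fun p : Fin n × Fin n => p.1 < p.2).card ≤ n.choose 2 := by
  have h := Finset.card_le_card_of_injOn
    (f := fun p : Fin n × Fin n => ({p.1, p.2} : Finset (Fin n)))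
    (s := Finset.univ.filter fun p : Fin n × Fin n => p.1 < p.2)
    (t := Finset.powersetCard 2 Finset.univ) ?_ ?_
  · simpa [Finset.card_powersetCard] using h
  · intro p hp
    rw [Finset.coe_filter] at hp
    simp only [Set.mem_setOf_eq] at hp
    rw [Finset.mem_coe, Finset.mem_powersetCard_univ]
    exact Finset.card_pair (ne_of_lt hp.2)
  · intro p hp q hq hpq
    rw [Finset.coe_filter] at hp hq
    simp only [Set.mem_setOf_eq] at hp hq
    obtain ⟨h1, h2⟩ := pair_eq hp.2 hq.2 hpq
    exact Prod.ext h1 h2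

end Stmt8Aux

open Stmt8Aux in
theorem stmt_8 (n k : ℕ) (hk : k < n) (G : SimpleGraph (Fin n)) [DecidableRel G.Adj] :
    (∃ S : Finset (Fin n), S.card ≤ k ∧ ∀ i j : Fin n, G.Adj i j → i ∈ S ∨ j ∈ S) ↔
    (∏ s ∈ Finset.Icc 1 (n.choose 2),
        ((∑ p ∈ Finset.univ.filter (fun p : Fin n × Fin n => p.1 < p.2 ∧ G.Adj p.1 p.2),
            (X p.1 * X p.2 : MvPolynomial (Fin n) ℚ)) - C (s : ℚ))) *
      (∏ t ∈ Finset.range (n - k), ((∑ i : Fin n, X i) - C (t : ℚ))) ∉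
    Ideal.span (Set.range fun i : Fin n =>
      (X i : MvPolynomial (Fin n) ℚ) ^ 2 - X i) := by
  set P : Finset (Fin n × Fin n) :=
    Finset.univ.filter (fun p : Fin n × Fin n => p.1 < p.2 ∧ G.Adj p.1 p.2) with hP
  set F : MvPolynomial (Fin n) ℚ :=
    (∏ s ∈ Finset.Icc 1 (n.choose 2),
        ((∑ p ∈ P, (X p.1 * X p.2 : MvPolynomial (Fin n) ℚ)) - C (s : ℚ))) *
      (∏ t ∈ Finset.range (n - k), ((∑ i : Fin n, X i) - C (t : ℚ))) with hF
  rw [show Ideal.span (Set.range fun i : Fin n =>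
      (X i : MvPolynomial (Fin n) ℚ) ^ 2 - X i) = I n from rfl]
  rw [mem_I_iff]
  push_neg
  -- eval computation for boolean points
  have hevalF : ∀ x : Fin n → ℚ,
      eval x F = (∏ s ∈ Finset.Icc 1 (n.choose 2),
        ((∑ p ∈ P, x p.1 * x p.2) - (s : ℚ))) *
      (∏ t ∈ Finset.range (n - k), ((∑ i : Fin n, x i) - (t : ℚ))) := by
    intro x
    simp [hF, map_prod, map_sub, map_sum, map_mul]
  have hsum : ∀ x : Fin n → ℚ, (∀ i, x i = 0 ∨ x i = 1) →
      (∑ i : Fin n, x i) = ((Finset.univ.filter fun i => x i = 1).card : ℚ) := by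
    intro x hx
    rw [← Finset.sum_boole]
    refine Finset.sum_congr rfl fun i _ => ?_
    rcases hx i with h | h <;> simp [h]
  have hesum : ∀ x : Fin n → ℚ, (∀ i, x i = 0 ∨ x i = 1) →
      (∑ p ∈ P, x p.1 * x p.2)
        = ((P.filter fun p => x p.1 = 1 ∧ x p.2 = 1).card : ℚ) := by
    intro x hx
    rw [← Finset.sum_boole]
    refine Finset.sum_congr rfl fun p _ => ?_
    rcases hx p.1 with h1 | h1 <;> rcases hx p.2 with h2 | h2 <;>
      simp [h1, h2]
  constructor
  · rintro ⟨S, hSk, hScov⟩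
    refine ⟨fun i => if i ∈ S then 0 else 1, fun i => by by_cases h : i ∈ S <;> simp [h], ?_⟩
    set x : Fin n → ℚ := fun i => if i ∈ S then 0 else 1 with hxdef
    have hx : ∀ i, x i = 0 ∨ x i = 1 := fun i => by by_cases h : i ∈ S <;> simp [hxdef, h]
    rw [hevalF x]
    have hW : (P.filter fun p => x p.1 = 1 ∧ x p.2 = 1) = ∅ := by
      rw [Finset.filter_eq_empty_iff]
      intro p hp
      rw [hP, Finset.mem_filter] at hp
      rcases hScov p.1 p.2 hp.2.2 with h | h <;> simp [hxdef, h]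
    have hT : (Finset.univ.filter fun i => x i = 1) = Sᶜ := by
      ext i
      by_cases h : i ∈ S <;> simp [hxdef, h]
    have hTcard : (Finset.univ.filter fun i => x i = 1).card = n - S.card := by
      rw [hT, Finset.card_compl, Fintype.card_fin]
    refine mul_ne_zero ?_ ?_
    · rw [Finset.prod_ne_zero_iff]
      intro s hs
      rw [hesum x hx, hW]
      simp only [Finset.card_empty, Nat.cast_zero, zero_sub, ne_eq, neg_eq_zero,
        Nat.cast_eq_zero]
      rw [Finset.mem_Icc] at hs
      omega
    · rw [Finset.prod_ne_zero_iff]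
      intro t ht
      rw [hsum x hx, hTcard]
      rw [Finset.mem_range] at ht
      have : t < n - S.card := by omega
      rw [sub_ne_zero]
      exact_mod_cast Nat.ne_of_gt this
  · rintro ⟨x, hx, hne⟩
    rw [hevalF x, mul_ne_zero_iff, Finset.prod_ne_zero_iff, Finset.prod_ne_zero_iff] at hne
    obtain ⟨hne1, hne2⟩ := hne
    set W := P.filter fun p => x p.1 = 1 ∧ x p.2 = 1 with hWdef
    set T := Finset.univ.filter fun i => x i = 1 with hTdef
    have hWcard : W.card ≤ n.choose 2 := by
      refine le_trans (Finset.card_le_card ?_) card_lt_pairs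
      intro p hp
      rw [hWdef, Finset.mem_filter, hP, Finset.mem_filter] at hp
      rw [Finset.mem_filter]
      exact ⟨Finset.mem_univ p, hp.1.2.1⟩
    have hW0 : W.card = 0 := by
      by_contra hW0
      have h1 : W.card ∈ Finset.Icc 1 (n.choose 2) := by
        rw [Finset.mem_Icc]; omega
      have := hne1 W.card h1
      rw [hesum x hx, ← hWdef] at this
      simp at this
    have hTcard : n - k ≤ T.card := by
      by_contra hTc
      push_neg at hTc
      have h1 : T.card ∈ Finset.range (n - k) := Finset.mem_range.mpr hTc
      have := hne2 T.card h1
      rw [hsum x hx, ← hTdef] at this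
      simp at this
    refine ⟨Tᶜ, ?_, ?_⟩
    · rw [Finset.card_compl, Fintype.card_fin]
      omega
    · intro i j hadj
      by_contra hcon
      push_neg at hcon
      obtain ⟨hi, hj⟩ := hcon
      rw [Finset.mem_compl, not_not, hTdef, Finset.mem_filter] at hi hj
      have hxi : x i = 1 := hi.2
      have hxj : x j = 1 := hj.2
      have hij : i ≠ j := G.ne_of_adj hadj
      have hWempty : W = ∅ := Finset.card_eq_zero.mp hW0
      rcases lt_or_gt_of_ne hij with hlt | hgt
      · have : (i, j) ∈ W := by
          rw [hWdef, Finset.mem_filter, hP, Finset.mem_filter]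
          exact ⟨⟨Finset.mem_univ _, hlt, hadj⟩, hxi, hxj⟩
        rw [hWempty] at this
        exact absurd this (Finset.notMem_empty _)
      · have : (j, i) ∈ W := by
          rw [hWdef, Finset.mem_filter, hP, Finset.mem_filter]
          exact ⟨⟨Finset.mem_univ _, hgt, G.adj_symm hadj⟩, hxj, hxi⟩
        rw [hWempty] at this
        exact absurd this (Finset.notMem_empty _)
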